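/- Let H be a complex Hilbert space, H₁ and H₂ closed subspaces of H, and P₁, P₂ the orthogonal projections onto H₁ and H₂. Then H₁ + H₂ is closed in H if and only if the range of the operator I − P₁P₂ is closed in H. -/

import Mathlib

/-- The orthogonal projection of a Hilbert space `H` onto a complete (closed) subspace `K`,
viewed as a continuous linear operator `H →L[ℂ] H`. -/
noncomputable def proj {H : Type*} [NormedAddCommGroup H] [InnerProductSpace ℂ H]
    (K : Submodule ℂ H) [CompleteSpace K] : H →L[ℂ] H :=
  K.subtypeL.comp (K.orthogonalProjection)

set_option linter.unusedSectionVars false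


section Aux

variable {H : Type*} [NormedAddCommGroup H] [InnerProductSpace ℂ H] [CompleteSpace H]

lemma proj_mem (K : Submodule ℂ H) [CompleteSpace K] (x : H) : proj K x ∈ K :=
  (K.orthogonalProjection x).2

lemma proj_eq_self (K : Submodule ℂ H) [CompleteSpace K] {x : H} (hx : x ∈ K) :
    proj K x = x := by
  exact Submodule.starProjection_eq_self_iff (K := K).2 hx

lemma proj_eq_zero (K : Submodule ℂ H) [CompleteSpace K] {x : H} (hx : x ∈ Kᗮ) :
    proj K x = 0 := by
  simpa [proj] using congrArg (Submodule.subtype K) (Submodule.orthogonalProjectionOnto_eq_zero_iff.2 hx)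

lemma sub_proj_mem (K : Submodule ℂ H) [CompleteSpace K] (x : H) : x - proj K x ∈ Kᗮ :=
  Submodule.sub_starProjection_mem_orthogonal (K := K) x

lemma one_sub_proj_orthogonal (K : Submodule ℂ H) [CompleteSpace K] :
    (1 : H →L[ℂ] H) - proj Kᗮ = proj K := by
  ext x
  have : ((Kᗮ.orthogonalProjection x : H)) = x - (K.orthogonalProjection x : H) :=
    Submodule.starProjection_orthogonal_val (K := K) x
  simp only [ContinuousLinearMap.sub_apply, ContinuousLinearMap.one_apply, proj,
    ContinuousLinearMap.comp_apply, Submodule.subtypeL_apply]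
  rw [this]
  abel

lemma range_proj (K : Submodule ℂ H) [CompleteSpace K] :
    Set.range ⇑(proj K) = (K : Set H) := by
  apply Set.Subset.antisymm
  · rintro _ ⟨x, rfl⟩
    exact proj_mem K x
  · intro x hx
    exact ⟨x, proj_eq_self K hx⟩

lemma proj_idem (K : Submodule ℂ H) [CompleteSpace K] : proj K * proj K = proj K := by
  ext x
  exact proj_eq_self K (proj_mem K x)

lemma adjoint_proj (K : Submodule ℂ H) [CompleteSpace K] :
    ContinuousLinearMap.adjoint (proj K) = proj K :=
  (isSelfAdjoint_starProjection K).adjoint_eq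

/-- Key lemma: for a complete subspace `V` and any subspace `W`,
`V ⊔ W` is closed iff `(1 - P_V) '' W` is closed. -/
lemma L1 (V W : Submodule ℂ H) [CompleteSpace V] :
    IsClosed ((V ⊔ W : Submodule ℂ H) : Set H) ↔
      IsClosed ((W.map ((1 : H →L[ℂ] H) - proj V).toLinearMap : Submodule ℂ H) : Set H) := by
  set Q : H →L[ℂ] H := (1 : H →L[ℂ] H) - proj V with hQ
  have hQapply : ∀ x : H, Q x = x - proj V x := fun x => rfl
  have hQV : ∀ x ∈ V, Q x = 0 := fun x hx => by
    rw [hQapply, proj_eq_self V hx, sub_self]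
  have hQperp : ∀ x ∈ Vᗮ, Q x = x := fun x hx => by
    rw [hQapply, proj_eq_zero V hx, sub_zero]
  have hWsub : ∀ x ∈ W.map Q.toLinearMap, x ∈ Vᗮ := by
    rintro _ ⟨w, _, rfl⟩
    exact sub_proj_mem V w
  constructor
  · intro hclosed
    have hset : ((W.map Q.toLinearMap : Submodule ℂ H) : Set H) = ((V ⊔ W : Submodule ℂ H) : Set H) ∩ Vᗮ := by
      ext x
      constructor
      · rintro ⟨w, hw, rfl⟩
        refine ⟨?_, sub_proj_mem V w⟩
        exact Submodule.sub_mem _ (Submodule.mem_sup_right hw)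
          (Submodule.mem_sup_left (proj_mem V w))
      · rintro ⟨hx, hperp⟩
        rcases Submodule.mem_sup.1 hx with ⟨v, hv, w, hw, rfl⟩
        refine ⟨w, hw, ?_⟩
        have h1 : Q (v + w) = Q w := by rw [map_add, hQV v hv, zero_add]
        have h2 : Q (v + w) = v + w := hQperp _ hperp
        rw [← h2, h1]; rfl
    rw [hset]
    exact hclosed.inter (Submodule.isClosed_orthogonal V)
  · intro hclosed
    have hsup : V ⊔ W = V ⊔ W.map Q.toLinearMap := by
      apply le_antisymm
      · apply sup_le le_sup_left
        intro w hw
        have : w = proj V w + Q w := by rw [hQapply]; abel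
        rw [this]
        exact Submodule.add_mem _ (Submodule.mem_sup_left (proj_mem V w))
          (Submodule.mem_sup_right ⟨w, hw, rfl⟩)
      · apply sup_le le_sup_left
        rintro _ ⟨w, hw, rfl⟩
        rw [ContinuousLinearMap.coe_coe, hQapply]
        exact Submodule.sub_mem _ (Submodule.mem_sup_right hw)
          (Submodule.mem_sup_left (proj_mem V w))
    rw [hsup]
    set W' := W.map Q.toLinearMap
    apply isClosed_of_closure_subset
    intro x hx
    have h1 : Q x ∈ closure (Q '' ((V ⊔ W' : Submodule ℂ H) : Set H)) :=
      (image_closure_subset_closure_image Q.continuous) ⟨x, hx, rfl⟩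
    have h2 : Q '' ((V ⊔ W' : Submodule ℂ H) : Set H) ⊆ (W' : Set H) := by
      rintro _ ⟨y, hy, rfl⟩
      rcases Submodule.mem_sup.1 hy with ⟨v, hv, w, hw, rfl⟩
      have : Q (v + w) = w := by
        rw [map_add, hQV v hv, zero_add, hQperp w (hWsub w hw)]
      rw [this]; exact hw
    have h3 : Q x ∈ (W' : Set H) := by
      have := closure_mono h2 h1
      rwa [hclosed.closure_eq] at this
    have : x = proj V x + Q x := by rw [hQapply]; abel
    rw [SetLike.mem_coe, this]
    exact Submodule.add_mem _ (Submodule.mem_sup_left (proj_mem V x))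
      (Submodule.mem_sup_right h3)

/-- Closed range iff bounded below on the orthogonal complement of the kernel. -/
lemma BB (T : H →L[ℂ] H) :
    IsClosed (Set.range ⇑T) ↔
      ∃ c : ℝ, 0 < c ∧ ∀ x ∈ (LinearMap.ker T.toLinearMap)ᗮ, c * ‖x‖ ≤ ‖T x‖ := by
  haveI : CompleteSpace (LinearMap.ker T.toLinearMap) :=
    (ContinuousLinearMap.isClosed_ker T).completeSpace_coe
  set K := (LinearMap.ker T.toLinearMap)ᗮ with hK
  haveI : CompleteSpace K := (Submodule.isClosed_orthogonal _).completeSpace_coe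
  have hrange : Set.range ⇑T = Set.range ⇑(T.comp K.subtypeL) := by
    apply Set.Subset.antisymm
    · rintro _ ⟨x, rfl⟩
      refine ⟨⟨(K.orthogonalProjection x : H), (K.orthogonalProjection x).2⟩, ?_⟩
      have hker : x - (K.orthogonalProjection x : H) ∈ LinearMap.ker T.toLinearMap := by
        have h := Submodule.sub_starProjection_mem_orthogonal (K := K) x
        have h2 : Kᗮ = LinearMap.ker T.toLinearMap := by
          rw [hK, Submodule.orthogonal_orthogonal]
        rwa [h2] at h
      have : T (x - (K.orthogonalProjection x : H)) = 0 := hker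
      rw [map_sub, sub_eq_zero] at this
      simpa using this.symm
    · rintro _ ⟨⟨x, hx⟩, rfl⟩
      exact ⟨x, rfl⟩
  have hinj : ∀ y : K, T y = 0 → y = 0 := by
    rintro ⟨y, hy⟩ h
    have hyk : y ∈ LinearMap.ker T.toLinearMap := h
    have : y = 0 := by
      have := Submodule.inner_right_of_mem_orthogonal hyk hy
      simpa [inner_self_eq_zero] using this
    exact Subtype.ext this
  constructor
  · intro hclosed
    set R := LinearMap.range (T.comp K.subtypeL).toLinearMap with hR
    have hRclosed : IsClosed (R : Set H) := by
      rw [hR]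
      have : (LinearMap.range (T.comp K.subtypeL).toLinearMap : Set H) = Set.range ⇑(T.comp K.subtypeL) := by
        ext x; simp [LinearMap.mem_range, Set.mem_range]
      rw [this, ← hrange]; exact hclosed
    haveI : CompleteSpace R := hRclosed.completeSpace_coe
    set S : K →L[ℂ] R := (T.comp K.subtypeL).codRestrict R (fun y => LinearMap.mem_range_self _ y)
    have hSinj : LinearMap.ker S.toLinearMap = ⊥ := by
      rw [LinearMap.ker_eq_bot']
      intro y hy
      apply hinj
      have := congrArg (Subtype.val) hy
      simpa [S] using this
    have hSsurj : LinearMap.range S.toLinearMap = ⊤ := by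
      rw [LinearMap.range_eq_top]
      rintro ⟨_, ⟨y, rfl⟩⟩
      exact ⟨y, rfl⟩
    set e := ContinuousLinearEquiv.ofBijective S hSinj hSsurj
    refine ⟨(‖(e.symm : R →L[ℂ] K)‖ + 1)⁻¹, by positivity, ?_⟩
    intro x hx
    rw [inv_mul_le_iff₀ (by positivity)]
    calc ‖x‖ = ‖(⟨x, hx⟩ : K)‖ := rfl
      _ = ‖e.symm (e ⟨x, hx⟩)‖ := by rw [e.symm_apply_apply]
      _ ≤ ‖(e.symm : R →L[ℂ] K)‖ * ‖e ⟨x, hx⟩‖ := (e.symm : R →L[ℂ] K).le_opNorm _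
      _ ≤ (‖(e.symm : R →L[ℂ] K)‖ + 1) * ‖e ⟨x, hx⟩‖ := by
          apply mul_le_mul_of_nonneg_right (by linarith) (norm_nonneg _)
      _ = (‖(e.symm : R →L[ℂ] K)‖ + 1) * ‖T x‖ := rfl
  · rintro ⟨c, hc, hbound⟩
    rw [hrange]
    have : AntilipschitzWith (⟨c, hc.le⟩ : NNReal)⁻¹ ⇑(T.comp K.subtypeL) := by
      apply ContinuousLinearMap.antilipschitz_of_bound
      rintro ⟨x, hx⟩
      have h := hbound x hx
      have h2 : ‖x‖ ≤ c⁻¹ * ‖T x‖ := by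
        rw [le_inv_mul_iff₀ hc]; exact h
      calc ‖(⟨x, hx⟩ : K)‖ = ‖x‖ := rfl
        _ ≤ c⁻¹ * ‖T x‖ := h2
        _ = ((⟨c, hc.le⟩ : NNReal)⁻¹ : ℝ) * ‖(T.comp K.subtypeL) ⟨x, hx⟩‖ := rfl
    exact this.isClosed_range (T.comp K.subtypeL).uniformContinuous

lemma ker_adjoint_comp (T : H →L[ℂ] H) :
    LinearMap.ker ((ContinuousLinearMap.adjoint T).comp T).toLinearMap = LinearMap.ker T.toLinearMap := by
  ext x
  simp only [LinearMap.mem_ker, ContinuousLinearMap.coe_comp', Function.comp_apply,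
    ContinuousLinearMap.coe_coe]
  constructor
  · intro h
    have h2 : (inner ℂ ((ContinuousLinearMap.adjoint T) (T x)) x : ℂ) = 0 := by
      rw [show (ContinuousLinearMap.adjoint T) (T x) = 0 from h]; simp
    rw [ContinuousLinearMap.adjoint_inner_left] at h2
    rwa [inner_self_eq_zero] at h2
  · intro h; rw [show T x = 0 from h]; simp

/-- Closed range of `T` iff closed range of `T†T`. -/
lemma CR (T : H →L[ℂ] H) :
    IsClosed (Set.range ⇑T) ↔ IsClosed (Set.range ⇑((ContinuousLinearMap.adjoint T).comp T)) := by
  rw [BB T, BB ((ContinuousLinearMap.adjoint T).comp T), ker_adjoint_comp T]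
  constructor
  · rintro ⟨c, hc, hb⟩
    refine ⟨c ^ 2, by positivity, ?_⟩
    intro x hx
    rcases eq_or_ne x 0 with rfl | hx0
    · simp
    have hTx : c * ‖x‖ ≤ ‖T x‖ := hb x hx
    have key : ‖T x‖ ^ 2 ≤ ‖(ContinuousLinearMap.adjoint T) (T x)‖ * ‖x‖ := by
      have h1 : (‖T x‖ : ℝ) ^ 2 = ‖(inner ℂ ((ContinuousLinearMap.adjoint T) (T x)) x : ℂ)‖ := by
        rw [ContinuousLinearMap.adjoint_inner_left, inner_self_eq_norm_sq_to_K]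
        simp [map_pow, Complex.norm_real, abs_of_nonneg (norm_nonneg _)]
      rw [h1]
      calc ‖(inner ℂ ((ContinuousLinearMap.adjoint T) (T x)) x : ℂ)‖
          = ‖(inner ℂ ((ContinuousLinearMap.adjoint T) (T x)) x : ℂ)‖ := rfl
        _ ≤ ‖(ContinuousLinearMap.adjoint T) (T x)‖ * ‖x‖ := norm_inner_le_norm _ _
    have hx0' : (0:ℝ) < ‖x‖ := norm_pos_iff.2 hx0
    have : (c * ‖x‖) ^ 2 ≤ ‖(ContinuousLinearMap.adjoint T) (T x)‖ * ‖x‖ := by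
      calc (c * ‖x‖) ^ 2 ≤ ‖T x‖ ^ 2 := by
            apply sq_le_sq' <;> nlinarith [norm_nonneg (T x)]
        _ ≤ _ := key
    have := (mul_le_mul_iff_left₀ hx0').mp
      (by ring_nf at this ⊢; nlinarith : c ^ 2 * ‖x‖ * ‖x‖ ≤ ‖(ContinuousLinearMap.adjoint T) (T x)‖ * ‖x‖)
    simpa using this
  · rintro ⟨c, hc, hb⟩
    rcases eq_or_ne T 0 with rfl | hT0
    · refine ⟨1, one_pos, ?_⟩
      intro x hx
      have hker : LinearMap.ker (0 : H →L[ℂ] H).toLinearMap = ⊤ := by ext y; simp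
      rw [hker, Submodule.top_orthogonal_eq_bot, Submodule.mem_bot] at hx
      simp [hx]
    have hTnorm : (0:ℝ) < ‖T‖ := norm_pos_iff.2 hT0
    refine ⟨c / ‖T‖, by positivity, ?_⟩
    intro x hx
    have h1 : c * ‖x‖ ≤ ‖(ContinuousLinearMap.adjoint T) (T x)‖ := hb x hx
    have h2 : ‖(ContinuousLinearMap.adjoint T) (T x)‖ ≤ ‖ContinuousLinearMap.adjoint T‖ * ‖T x‖ := (ContinuousLinearMap.adjoint T).le_opNorm _
    rw [div_mul_eq_mul_div, div_le_iff₀ hTnorm]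
    calc c * ‖x‖ ≤ ‖(ContinuousLinearMap.adjoint T) (T x)‖ := h1
      _ ≤ ‖ContinuousLinearMap.adjoint T‖ * ‖T x‖ := h2
      _ = ‖T x‖ * ‖T‖ := by
          rw [LinearIsometryEquiv.norm_map
            (ContinuousLinearMap.adjoint : (H →L[ℂ] H) ≃ₗᵢ⋆[ℂ] (H →L[ℂ] H)) T]
          ring

end Aux

/-- `H₁ + H₂` is closed iff the range of `I − P₁P₂` is closed. -/
theorem stmt3 {H : Type*} [NormedAddCommGroup H] [InnerProductSpace ℂ H] [CompleteSpace H]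
    (H₁ H₂ : Submodule ℂ H) [CompleteSpace H₁] [CompleteSpace H₂] :
    IsClosed ((H₁ ⊔ H₂ : Submodule ℂ H) : Set H) ↔
      IsClosed (Set.range ⇑((1 : H →L[ℂ] H) - proj H₁ * proj H₂)) := by
  haveI : CompleteSpace H₂ᗮ := (Submodule.isClosed_orthogonal H₂).completeSpace_coe
  set P₁ : H →L[ℂ] H := proj H₁ with hP₁
  set P₂ : H →L[ℂ] H := proj H₂ with hP₂
  set T : H →L[ℂ] H := ((1 : H →L[ℂ] H) - P₁) * P₂ with hT
  -- Step B : the image (1-P₁)''H₂ is the range of T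
  have hB : ((H₂.map ((1 : H →L[ℂ] H) - P₁).toLinearMap : Submodule ℂ H) : Set H) = Set.range ⇑T := by
    rw [Submodule.map_coe, ← range_proj H₂, hT]
    rw [show ⇑(((1 : H →L[ℂ] H) - P₁) * P₂) = ⇑((1 : H →L[ℂ] H) - P₁) ∘ ⇑P₂ from rfl]
    rw [Set.range_comp]
    rfl
  -- Step D : ContinuousLinearMap.adjoint T * T = P₂ * ((1-P₁) * P₂)
  have hone_sub_idem : ((1 : H →L[ℂ] H) - P₁) * ((1 : H →L[ℂ] H) - P₁) = (1 : H →L[ℂ] H) - P₁ := by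
    have h := proj_idem H₁
    rw [sub_mul, one_mul, mul_sub, mul_one, ← hP₁] at *
    rw [h]
    abel
  have hadjT : ContinuousLinearMap.adjoint T = P₂ * ((1 : H →L[ℂ] H) - P₁) := by
    rw [hT, ← ContinuousLinearMap.star_eq_adjoint, star_mul, star_sub, star_one,
      ContinuousLinearMap.star_eq_adjoint, ContinuousLinearMap.star_eq_adjoint,
      hP₁, hP₂, adjoint_proj, adjoint_proj]
  have hD : (ContinuousLinearMap.adjoint T).comp T = P₂ * (((1 : H →L[ℂ] H) - P₁) * P₂) := by
    rw [show (ContinuousLinearMap.adjoint T).comp T = ContinuousLinearMap.adjoint T * T from rfl,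
      hadjT, hT, mul_assoc, ← mul_assoc ((1 : H →L[ℂ] H) - P₁), hone_sub_idem]
  -- Step E : range of T†T is the image P₂''((1-P₁)''H₂)
  have hE : Set.range ⇑((ContinuousLinearMap.adjoint T).comp T)
      = (((H₂.map ((1 : H →L[ℂ] H) - P₁).toLinearMap).map ((1 : H →L[ℂ] H) - proj H₂ᗮ).toLinearMap :
          Submodule ℂ H) : Set H) := by
    rw [hD, one_sub_proj_orthogonal H₂, ← hP₂, Submodule.map_coe, Submodule.map_coe,
      ← range_proj H₂, ← hP₂]
    rw [show ⇑(P₂ * (((1 : H →L[ℂ] H) - P₁) * P₂))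
        = ⇑P₂ ∘ (⇑((1 : H →L[ℂ] H) - P₁) ∘ ⇑P₂) from rfl]
    rw [Set.range_comp, Set.range_comp]
    rfl
  -- Step G : H₂ᗮ ⊔ (1-P₁)''H₂ is the range of 1 - P₁P₂
  have hG : ((H₂ᗮ ⊔ H₂.map ((1 : H →L[ℂ] H) - P₁).toLinearMap : Submodule ℂ H) : Set H)
      = Set.range ⇑((1 : H →L[ℂ] H) - P₁ * P₂) := by
    ext x
    constructor
    · intro hx
      rcases Submodule.mem_sup.1 hx with ⟨v, hv, w', hw', rfl⟩
      rcases hw' with ⟨w, hw, rfl⟩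
      refine ⟨v + w, ?_⟩
      have h1 : P₂ (v + w) = w := by
        rw [map_add, hP₂, proj_eq_zero H₂ hv, proj_eq_self H₂ hw, zero_add]
      show (v + w) - P₁ (P₂ (v + w)) = v + (w - P₁ w)
      rw [h1]
      abel
    · rintro ⟨y, rfl⟩
      show y - P₁ (P₂ y) ∈ H₂ᗮ ⊔ H₂.map ((1 : H →L[ℂ] H) - P₁).toLinearMap
      have hdecomp : y - P₁ (P₂ y) = (y - P₂ y) + (P₂ y - P₁ (P₂ y)) := by abel
      rw [hdecomp]
      refine Submodule.add_mem _ (Submodule.mem_sup_left ?_) (Submodule.mem_sup_right ?_)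
      · exact sub_proj_mem H₂ y
      · exact ⟨P₂ y, proj_mem H₂ y, rfl⟩
  calc IsClosed ((H₁ ⊔ H₂ : Submodule ℂ H) : Set H)
      ↔ IsClosed ((H₂.map ((1 : H →L[ℂ] H) - P₁).toLinearMap : Submodule ℂ H) : Set H) := L1 H₁ H₂
    _ ↔ IsClosed (Set.range ⇑T) := by rw [hB]
    _ ↔ IsClosed (Set.range ⇑((ContinuousLinearMap.adjoint T).comp T)) := CR T
    _ ↔ IsClosed (((H₂.map ((1 : H →L[ℂ] H) - P₁).toLinearMap).map ((1 : H →L[ℂ] H) - proj H₂ᗮ).toLinearMap :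
          Submodule ℂ H) : Set H) := by rw [hE]
    _ ↔ IsClosed ((H₂ᗮ ⊔ H₂.map ((1 : H →L[ℂ] H) - P₁).toLinearMap : Submodule ℂ H) : Set H) :=
          (L1 H₂ᗮ (H₂.map ((1 : H →L[ℂ] H) - P₁).toLinearMap)).symm
    _ ↔ IsClosed (Set.range ⇑((1 : H →L[ℂ] H) - P₁ * P₂)) := by rw [hG]
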